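/- Let X ∈ ℝ^{n×d} be full rank and d ≤ s < t ≤ n. Consider the hierarchical procedure: first sample T of size t by volume sampling from X, then sample S of size s by volume sampling from X_T. Then the resulting S is distributed according to size-s volume sampling from X, i.e., P(S) = det(X_S^⊤X_S)/((n−d choose s−d) det(X^⊤X)). -/

import Mathlib

open Matrix Finset

noncomputable section

/-- The submatrix of `X` consisting of the rows indexed by the subset `S`. -/
def rowSub {n d : ℕ} (X : Matrix (Fin n) (Fin d) ℝ) (S : Finset (Fin n)) :
    Matrix {i // i ∈ S} (Fin d) ℝ :=
  X.submatrix (fun i => (i : Fin n)) id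

/-- `X_S^⊤ X_S`. -/
def gram {n d : ℕ} (X : Matrix (Fin n) (Fin d) ℝ) (S : Finset (Fin n)) :
    Matrix (Fin d) (Fin d) ℝ :=
  (rowSub X S)ᵀ * rowSub X S

lemma det_ne_zero_of_rank_eq {d : ℕ} (G : Matrix (Fin d) (Fin d) ℝ) (h : G.rank = d) :
    G.det ≠ 0 := by
  have h2 : LinearMap.range G.mulVecLin = ⊤ :=
    Submodule.eq_top_of_finrank_eq (by simpa [Matrix.rank] using h)
  have hsurj : Function.Surjective G.mulVec := fun y => LinearMap.range_eq_top.mp h2 y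
  have := Matrix.mulVec_surjective_iff_isUnit.mp hsurj
  exact ((Matrix.isUnit_iff_isUnit_det G).mp this).ne_zero

lemma rank_eq_of_det_ne_zero {d : ℕ} (G : Matrix (Fin d) (Fin d) ℝ) (h : G.det ≠ 0) :
    G.rank = d := by
  have := Matrix.rank_of_isUnit G ((Matrix.isUnit_iff_isUnit_det G).mpr (isUnit_iff_ne_zero.mpr h))
  simpa using this

lemma rank_rowSub_mono {n d : ℕ} (X : Matrix (Fin n) (Fin d) ℝ) {S T : Finset (Fin n)}
    (hST : S ⊆ T) : (rowSub X S).rank ≤ (rowSub X T).rank := by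
  classical
  let g : {i // i ∈ S} → {i // i ∈ T} := fun i => ⟨i, hST i.2⟩
  let E : Matrix {i // i ∈ S} {i // i ∈ T} ℝ := fun i j => if g i = j then 1 else 0
  have hE : E * rowSub X T = rowSub X S := by
    ext i k
    rw [Matrix.mul_apply]; simp only [E]
    rw [Finset.sum_eq_single (g i)]
    · simp [rowSub, g]
    · intro b _ hb; simp [Ne.symm hb]
    · simp
  calc (rowSub X S).rank = (E * rowSub X T).rank := by rw [hE]
    _ ≤ (rowSub X T).rank := Matrix.rank_mul_le_right _ _

lemma card_supersets {n s t : ℕ} (S : Finset (Fin n)) (hS : S.card = s) (hst : s ≤ t) :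
    ((Finset.powersetCard t (Finset.univ : Finset (Fin n))).filter (fun T => S ⊆ T)).card
      = (n - s).choose (t - s) := by
  classical
  have hcompl : Sᶜ.card = n - s := by simp [Finset.card_compl, hS]
  rw [← hcompl, ← Finset.card_powersetCard]
  apply Finset.card_bij' (fun T _ => T \ S) (fun U _ => U ∪ S)
  · intro T hT
    simp only [Finset.mem_filter, Finset.mem_powersetCard] at hT
    obtain ⟨⟨_, hcard⟩, hsub⟩ := hT
    rw [Finset.mem_powersetCard]
    constructor
    · intro x hx
      simp only [Finset.mem_sdiff] at hx
      simp [Finset.mem_compl, hx.2]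
    · rw [Finset.card_sdiff_of_subset hsub, hcard, hS]
  · intro U hU
    simp only [Finset.mem_powersetCard] at hU
    obtain ⟨hsub, hcard⟩ := hU
    have hdisj : Disjoint U S := by
      rw [Finset.disjoint_right]
      intro x hxS hxU
      exact (Finset.mem_compl.mp (hsub hxU)) hxS
    simp only [Finset.mem_filter, Finset.mem_powersetCard]
    refine ⟨⟨Finset.subset_univ _, ?_⟩, Finset.subset_union_right⟩
    rw [Finset.card_union_of_disjoint hdisj, hcard, hS]
    omega
  · intro T hT
    simp only [Finset.mem_filter] at hT
    exact Finset.sdiff_union_of_subset hT.2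
  · intro U hU
    simp only [Finset.mem_powersetCard] at hU
    have hdisj : Disjoint U S := by
      rw [Finset.disjoint_right]
      intro x hxS hxU
      exact (Finset.mem_compl.mp (hU.1 hxU)) hxS
    exact Finset.union_sdiff_cancel_right hdisj

/-- Composition of volume sampling: sampling `T` of size `t` by volume sampling from `X`,
then `S` of size `s` by volume sampling from `X_T`, yields size-`s` volume sampling from `X`. -/
theorem volume_sampling_composition {n d : ℕ} (X : Matrix (Fin n) (Fin d) ℝ)
    (hrank : X.rank = d) (s t : ℕ) (hds : d ≤ s) (hst : s < t) (htn : t ≤ n)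
    (S : Finset (Fin n)) (hS : S.card = s) :
    ∑ T ∈ (Finset.powersetCard t (Finset.univ : Finset (Fin n))).filter (fun T => S ⊆ T),
        ((gram X T).det / (((n - d).choose (t - d) : ℝ) * (Xᵀ * X).det)) *
          ((gram X S).det / (((t - d).choose (s - d) : ℝ) * (gram X T).det))
      = (gram X S).det / (((n - d).choose (s - d) : ℝ) * (Xᵀ * X).det) := by
  classical
  have hXdet : (Xᵀ * X).det ≠ 0 := by
    apply det_ne_zero_of_rank_eq
    rw [Matrix.rank_transpose_mul_self, hrank]
  by_cases hdetS : (gram X S).det = 0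
  · simp [hdetS]
  · -- S has full rank d
    have hrankS : (rowSub X S).rank = d := by
      have := rank_eq_of_det_ne_zero _ hdetS
      rwa [_root_.gram, Matrix.rank_transpose_mul_self] at this
    have hkey : ∀ T ∈ (Finset.powersetCard t (Finset.univ : Finset (Fin n))).filter
        (fun T => S ⊆ T), (gram X T).det ≠ 0 := by
      intro T hT
      simp only [Finset.mem_filter] at hT
      have h1 : (rowSub X T).rank = d := by
        have hle := rank_rowSub_mono X hT.2
        have hub : (rowSub X T).rank ≤ d := by
          simpa using Matrix.rank_le_card_width (rowSub X T)
        omega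
      apply det_ne_zero_of_rank_eq
      rwa [_root_.gram, Matrix.rank_transpose_mul_self]
    have hc1 : (((n - d).choose (t - d) : ℝ)) ≠ 0 := by
      exact_mod_cast (Nat.choose_pos (by omega : t - d ≤ n - d)).ne'
    have hc2 : (((t - d).choose (s - d) : ℝ)) ≠ 0 := by
      exact_mod_cast (Nat.choose_pos (by omega : s - d ≤ t - d)).ne'
    have hterm : ∀ T ∈ (Finset.powersetCard t (Finset.univ : Finset (Fin n))).filter
        (fun T => S ⊆ T),
        ((gram X T).det / (((n - d).choose (t - d) : ℝ) * (Xᵀ * X).det)) *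
          ((gram X S).det / (((t - d).choose (s - d) : ℝ) * (gram X T).det))
        = (gram X S).det /
            (((n - d).choose (t - d) : ℝ) * ((t - d).choose (s - d) : ℝ) * (Xᵀ * X).det) := by
      intro T hT
      have hdT := hkey T hT
      field_simp
    rw [Finset.sum_congr rfl hterm, Finset.sum_const, card_supersets S hS hst.le, nsmul_eq_mul]
    have hcomb : ((n - d).choose (t - d) : ℝ) * ((t - d).choose (s - d) : ℝ)
        = ((n - d).choose (s - d) : ℝ) * ((n - s).choose (t - s) : ℝ) := by
      have h1 := Nat.choose_mul (n := n - d) (by omega : s - d ≤ t - d)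
      have h2 : n - d - (s - d) = n - s := by omega
      have h3 : t - d - (s - d) = t - s := by omega
      rw [h2, h3] at h1
      exact_mod_cast h1
    have hc3 : (((n - d).choose (s - d) : ℝ)) ≠ 0 := by
      exact_mod_cast (Nat.choose_pos (by omega : s - d ≤ n - d)).ne'
    have hc4 : (((n - s).choose (t - s) : ℝ)) ≠ 0 := by
      exact_mod_cast (Nat.choose_pos (by omega : t - s ≤ n - s)).ne'
    field_simp
    linear_combination -hcomb
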